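/- Let G be the labeled graph of a 2→1 hypergraph with Property S and with at most one hyperedge per 3-element vertex set. Then no two overloaded pairs of vertices share a vertex: if {x,y} and {y,z} are both pairs joined by at least two parallel edges, then a contradiction arises. -/
import Mathlib

set_option maxHeartbeats 1000000


/-- In the labeled multigraph of a `2→1` hypergraph with Property S and with at most
one hyperedge per 3-element vertex set, no two overloaded pairs (pairs carrying
parallel edges) share a vertex. -/
theorem stmt15 {V : Type*} [DecidableEq V] (H : Set (Finset V × V))
    (hedge : ∀ e ∈ H, e.1.card = 2 ∧ e.2 ∉ e.1)
    (huniq : ∀ e₁ ∈ H, ∀ e₂ ∈ H, insert e₁.2 e₁.1 = insert e₂.2 e₂.1 → e₁ = e₂)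
    (hS : ∀ e₁ ∈ H, ∀ e₂ ∈ H, ∀ v : V,
      (insert e₁.2 e₁.1) ∩ (insert e₂.2 e₂.1) = {v} → v = e₁.2 ∨ v = e₂.2)
    (x y z : V) (hxy : x ≠ y) (hyz : y ≠ z) (hxz : x ≠ z)
    (c₁ c₂ d₁ d₂ : V) (hc : c₁ ≠ c₂) (hd : d₁ ≠ d₂)
    (h1 : (({x, y} : Finset V), c₁) ∈ H) (h2 : (({x, y} : Finset V), c₂) ∈ H)
    (h3 : (({y, z} : Finset V), d₁) ∈ H) (h4 : (({y, z} : Finset V), d₂) ∈ H) :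
    False := by
  have key : ∀ c d : V, (({x, y} : Finset V), c) ∈ H → (({y, z} : Finset V), d) ∈ H →
      c = z ∨ c = d ∨ d = x := by
    intro c d hcH hdH
    by_contra hcon
    push_neg at hcon
    obtain ⟨hcz, hcd, hdx⟩ := hcon
    have hc' := (hedge _ hcH).2
    have hd' := (hedge _ hdH).2
    simp only [Finset.mem_insert, Finset.mem_singleton, not_or] at hc' hd'
    obtain ⟨hcx, hcy⟩ := hc'
    obtain ⟨hdy, hdz⟩ := hd'
    have hint : (insert c {x, y} : Finset V) ∩ (insert d {y, z} : Finset V) = {y} := by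
      ext a
      simp only [Finset.mem_inter, Finset.mem_insert, Finset.mem_singleton]
      constructor
      · rintro ⟨(rfl | rfl | rfl), (h | h | h)⟩ <;> tauto
      · rintro rfl; tauto
    have := hS _ hcH _ hdH y hint
    simp only at this
    rcases this with h | h
    · exact hcy h.symm
    · exact hdy h.symm
  have K1 := key c₁ d₁ h1 h3
  have K2 := key c₁ d₂ h1 h4
  have K3 := key c₂ d₁ h2 h3
  have K4 := key c₂ d₂ h2 h4
  have hbad : (({x, y} : Finset V), z) ∈ H → (({y, z} : Finset V), x) ∈ H → False := by
    intro ha hb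
    have heq : (insert z {x, y} : Finset V) = insert x {y, z} := by
      ext a
      simp only [Finset.mem_insert, Finset.mem_singleton]
      constructor
      · rintro (rfl | rfl | rfl) <;> tauto
      · rintro (rfl | rfl | rfl) <;> tauto
    have := huniq _ ha _ hb heq
    have : z = x := congrArg Prod.snd this
    exact hxz this.symm
  have hcz : c₁ = z ∨ c₂ = z := by
    by_contra hcon
    push_neg at hcon
    obtain ⟨e1, e2⟩ := hcon
    rcases K1 with h | h | h <;> rcases K2 with h' | h' | h' <;>
      rcases K3 with h'' | h'' | h'' <;> rcases K4 with h''' | h''' | h''' <;>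
      subst_vars <;>
      first | exact hc rfl | exact hd rfl | exact e1 rfl | exact e2 rfl
  have hdx : d₁ = x ∨ d₂ = x := by
    by_contra hcon
    push_neg at hcon
    obtain ⟨e1, e2⟩ := hcon
    rcases K1 with h | h | h <;> rcases K2 with h' | h' | h' <;>
      rcases K3 with h'' | h'' | h'' <;> rcases K4 with h''' | h''' | h''' <;>
      subst_vars <;>
      first | exact hc rfl | exact hd rfl | exact e1 rfl | exact e2 rfl
  rcases hcz with rfl | rfl <;> rcases hdx with rfl | rfl
  · exact hbad h1 h3
  · exact hbad h1 h4
  · exact hbad h2 h3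
  · exact hbad h2 h4
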